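/- Let f = z_1^4 + (z_1 z_2 − 1)^2 ∈ ℂ[z_1, z_2], viewed as a polynomial mapping ℂ^2 → ℂ (so p = 1 and κ(df(x)) = ‖∇f(x)‖). Then the set of asymptotic critical values of f is exactly K_∞(f) = {0}. -/

import Mathlib

open MvPolynomial Filter

/-- Euclidean norm on `ℂ^m`. -/
noncomputable def eucNorm {m : ℕ} (v : Fin m → ℂ) : ℝ :=
  Real.sqrt (∑ k, ‖v k‖ ^ 2)

/-- The set of asymptotic critical values of a polynomial map `f : ℂ^n → ℂ`
(the case `p = 1`, where the Kuo distance `κ(df(x))` is the Euclidean norm of the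
gradient `∇f(x)`). -/
def Kinf1 {n : ℕ} (f : MvPolynomial (Fin n) ℂ) : Set ℂ :=
  { c | ∃ x : ℕ → (Fin n → ℂ),
      Tendsto (fun t => eucNorm (x t)) atTop atTop ∧
      Tendsto (fun t => MvPolynomial.eval (x t) f) atTop (nhds c) ∧
      Tendsto (fun t => eucNorm (x t) *
        eucNorm (fun k => MvPolynomial.eval (x t) (MvPolynomial.pderiv k f)))
        atTop (nhds 0) }

lemma eucNorm_nonneg {m : ℕ} (v : Fin m → ℂ) : 0 ≤ eucNorm v := Real.sqrt_nonneg _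

lemma norm_le_eucNorm {m : ℕ} (v : Fin m → ℂ) (k : Fin m) :
    ‖v k‖ ≤ eucNorm v := by
  rw [eucNorm, show ‖v k‖ = Real.sqrt (‖v k‖^2) from (Real.sqrt_sq (norm_nonneg _)).symm]
  exact Real.sqrt_le_sqrt
    (Finset.single_le_sum (f := fun j => ‖v j‖^2) (fun i _ => sq_nonneg _) (Finset.mem_univ k))

lemma sq_tendsto_zero {z : ℕ → ℂ} (h : Tendsto (fun t => (z t)^2) atTop (nhds 0)) :
    Tendsto z atTop (nhds 0) := by
  rw [tendsto_zero_iff_norm_tendsto_zero] at h ⊢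
  have h2 : Tendsto (fun t => ‖z t‖^2) atTop (nhds 0) := by
    simpa [norm_pow] using h
  have h3 := (Real.continuous_sqrt.tendsto 0).comp h2
  have h4 : ((fun x => Real.sqrt x) ∘ fun t => ‖z t‖^2) = fun t => ‖z t‖ :=
    funext fun t => Real.sqrt_sq (norm_nonneg _)
  rw [Real.sqrt_zero] at h3
  rw [h4] at h3; exact h3

lemma eval_Fpoly (x : Fin 2 → ℂ) :
    eval x ((X 0) ^ 4 + (X 0 * X 1 - 1) ^ 2 : MvPolynomial (Fin 2) ℂ)
      = (x 0)^4 + (x 0 * x 1 - 1)^2 := by simp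

lemma eval_pd0 (x : Fin 2 → ℂ) :
    eval x (pderiv 0 ((X 0) ^ 4 + (X 0 * X 1 - 1) ^ 2 : MvPolynomial (Fin 2) ℂ))
      = 4*(x 0)^3 + 2*(x 0 * x 1 - 1) * x 1 := by
  simp [pderiv_pow, pderiv_mul, pderiv_X]
  ring

lemma eval_pd1 (x : Fin 2 → ℂ) :
    eval x (pderiv 1 ((X 0) ^ 4 + (X 0 * X 1 - 1) ^ 2 : MvPolynomial (Fin 2) ℂ))
      = 2*(x 0 * x 1 - 1) * x 0 := by
  simp [pderiv_pow, pderiv_mul, pderiv_X]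
  ring

/-- the set of asymptotic critical values of
`f = z₁⁴ + (z₁z₂ − 1)² : ℂ² → ℂ` is exactly `{0}`. -/
theorem Kinf_example_eq_zero :
    Kinf1 ((X 0) ^ 4 + (X 0 * X 1 - 1) ^ 2 : MvPolynomial (Fin 2) ℂ) = {0} := by
  apply Set.eq_of_subset_of_subset
  · -- Kinf1 ⊆ {0}
    rintro c ⟨x, hN, hf, hP⟩
    set P : MvPolynomial (Fin 2) ℂ := (X 0) ^ 4 + (X 0 * X 1 - 1) ^ 2 with hP_def
    set a : ℕ → ℂ := fun t => x t 0 with ha_def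
    set b : ℕ → ℂ := fun t => x t 1 with hb_def
    set u : ℕ → ℂ := fun t => a t * b t - 1 with hu_def
    set N : ℕ → ℝ := fun t => eucNorm (x t) with hN_def
    set G : ℕ → ℝ := fun t => eucNorm (fun k => eval (x t) (pderiv k P)) with hG_def
    have hf' : Tendsto (fun t => (a t)^4 + (u t)^2) atTop (nhds c) := by
      have := hf
      simp only [hP_def, eval_Fpoly] at this
      exact this
    have hbNa : ∀ t, ‖a t‖ ≤ N t := fun t => norm_le_eucNorm (x t) 0
    have hbNb : ∀ t, ‖b t‖ ≤ N t := fun t => norm_le_eucNorm (x t) 1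
    have hbG0 : ∀ t, ‖eval (x t) (pderiv 0 P)‖ ≤ G t :=
      fun t => norm_le_eucNorm (fun k => eval (x t) (pderiv k P)) 0
    have hbG1 : ∀ t, ‖eval (x t) (pderiv 1 P)‖ ≤ G t :=
      fun t => norm_le_eucNorm (fun k => eval (x t) (pderiv k P)) 1
    have hGnn : ∀ t, 0 ≤ G t := fun t => eucNorm_nonneg _
    have hNnn : ∀ t, 0 ≤ N t := fun t => eucNorm_nonneg _
    -- the Euler-type combination
    have hq : Tendsto (fun t => 4*(a t)^4 + 4*(u t)^2 + 4*u t) atTop (nhds 0) := by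
      rw [tendsto_zero_iff_norm_tendsto_zero]
      apply squeeze_zero (fun t => norm_nonneg _) (g := fun t => 2 * (N t * G t))
      · intro t
        have he : 4*(a t)^4 + 4*(u t)^2 + 4*u t
            = a t * eval (x t) (pderiv 0 P) + b t * eval (x t) (pderiv 1 P) := by
          rw [eval_pd0, eval_pd1, hu_def]; ring
        rw [he]
        calc ‖a t * eval (x t) (pderiv 0 P) + b t * eval (x t) (pderiv 1 P)‖
            ≤ ‖a t * eval (x t) (pderiv 0 P)‖ + ‖b t * eval (x t) (pderiv 1 P)‖ :=
              norm_add_le _ _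
          _ = ‖a t‖ * ‖eval (x t) (pderiv 0 P)‖ + ‖b t‖ * ‖eval (x t) (pderiv 1 P)‖ := by
              rw [norm_mul, norm_mul]
          _ ≤ N t * G t + N t * G t :=
              add_le_add (mul_le_mul (hbNa t) (hbG0 t) (norm_nonneg _) (hNnn t))
                (mul_le_mul (hbNb t) (hbG1 t) (norm_nonneg _) (hNnn t))
          _ = 2 * (N t * G t) := by ring
      · simpa using hP.const_mul 2
    have hu : Tendsto u atTop (nhds (-c)) := by
      have h1 := (hq.sub (hf'.const_mul 4)).div_const (4 : ℂ)
      have he : (fun t => ((4*(a t)^4 + 4*(u t)^2 + 4*u t) - 4*((a t)^4 + (u t)^2)) / 4)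
          = u := funext fun t => by ring
      have hc4 : ((0:ℂ) - 4*c)/4 = -c := by ring
      rwa [he, hc4] at h1
    -- b * ∂₁f → 0
    have hbu1 : Tendsto (fun t => 2*((u t + 1) * u t)) atTop (nhds 0) := by
      rw [tendsto_zero_iff_norm_tendsto_zero]
      apply squeeze_zero (fun t => norm_nonneg _) (g := fun t => N t * G t)
      · intro t
        have he : 2*((u t + 1) * u t) = b t * eval (x t) (pderiv 1 P) := by
          rw [eval_pd1, hu_def]; ring
        rw [he, norm_mul]
        exact mul_le_mul (hbNb t) (hbG1 t) (norm_nonneg _) (hNnn t)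
      · exact hP
    have hlim1 : Tendsto (fun t => 2*((u t + 1) * u t)) atTop
        (nhds (2*((-c + 1) * (-c)))) :=
      ((hu.add_const 1).mul hu).const_mul 2
    have heq : (0:ℂ) = 2*((-c + 1) * (-c)) := tendsto_nhds_unique hbu1 hlim1
    have hcc : c = 0 ∨ c = 1 := by
      have h2 : c * (c - 1) = 0 := by linear_combination (-1/2 : ℂ) * heq
      rcases mul_eq_zero.mp h2 with h | h
      · exact Or.inl h
      · exact Or.inr (by linear_combination h)
    rcases hcc with hc0 | hc1
    · exact hc0
    · -- rule out c = 1
      exfalso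
      subst hc1
      have hu2 : Tendsto (fun t => (u t)^2) atTop (nhds 1) := by
        have := hu.mul hu
        norm_num at this
        convert this using 1
        · funext t; ring
      have ha4 : Tendsto (fun t => (a t)^4) atTop (nhds 0) := by
        have h1 := hf'.sub hu2
        have he : (fun t => ((a t)^4 + (u t)^2) - (u t)^2) = fun t => (a t)^4 :=
          funext fun t => by ring
        rw [he] at h1
        simpa using h1
      have ha2 : Tendsto (fun t => (a t)^2) atTop (nhds 0) := by
        apply sq_tendsto_zero
        have he : (fun t => ((a t)^2)^2) = fun t => (a t)^4 := funext fun t => by ring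
        rw [he]; exact ha4
      have ha : Tendsto a atTop (nhds 0) := sq_tendsto_zero ha2
      -- b * ∂₀f → 0
      have hbd0 : Tendsto (fun t => 4*(a t)^2*(u t + 1) + 2*(b t)^2 * u t) atTop (nhds 0) := by
        rw [tendsto_zero_iff_norm_tendsto_zero]
        apply squeeze_zero (fun t => norm_nonneg _) (g := fun t => N t * G t)
        · intro t
          have he : 4*(a t)^2*(u t + 1) + 2*(b t)^2 * u t
              = b t * eval (x t) (pderiv 0 P) := by
            rw [eval_pd0, hu_def]; ring
          rw [he, norm_mul]
          exact mul_le_mul (hbNb t) (hbG0 t) (norm_nonneg _) (hNnn t)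
        · exact hP
      have hterm : Tendsto (fun t => 4*(a t)^2*(u t + 1)) atTop (nhds 0) := by
        have := (ha2.mul (hu.add_const 1)).const_mul (4:ℂ)
        norm_num at this
        convert this using 1
        funext t; ring
      have hb2u : Tendsto (fun t => 2*(b t)^2 * u t) atTop (nhds 0) := by
        have h1 := hbd0.sub hterm
        have he : (fun t => (4*(a t)^2*(u t + 1) + 2*(b t)^2 * u t) - 4*(a t)^2*(u t + 1))
            = fun t => 2*(b t)^2 * u t := funext fun t => by ring
        rw [he] at h1; simpa using h1
      have hne : ∀ᶠ t in atTop, u t ≠ 0 := hu.eventually_ne (by norm_num)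
      have hb2 : Tendsto (fun t => (b t)^2) atTop (nhds 0) := by
        have hden : Tendsto (fun t => 2 * u t) atTop (nhds (2 * (-1 : ℂ))) :=
          hu.const_mul 2
        have hdiv := hb2u.div hden (by norm_num)
        have he : (fun t => (2*(b t)^2 * u t) / (2 * u t)) =ᶠ[atTop] fun t => (b t)^2 := by
          filter_upwards [hne] with t ht
          field_simp
        have := hdiv.congr' he
        simpa using this
      have hb : Tendsto b atTop (nhds 0) := sq_tendsto_zero hb2
      -- N → 0, contradiction with N → ∞
      have hN0 : Tendsto N atTop (nhds 0) := by
        have hsum : Tendsto (fun t => ‖a t‖^2 + ‖b t‖^2) atTop (nhds 0) := by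
          have ha' : Tendsto (fun t => ‖a t‖) atTop (nhds 0) :=
            by simpa using ha.norm
          have hb' : Tendsto (fun t => ‖b t‖) atTop (nhds 0) :=
            by simpa using hb.norm
          have := (ha'.pow 2).add (hb'.pow 2)
          simpa using this
        have h3 := (Real.continuous_sqrt.tendsto 0).comp hsum
        rw [Real.sqrt_zero] at h3
        have he : N = fun t => Real.sqrt (‖a t‖^2 + ‖b t‖^2) := by
          funext t
          rw [hN_def]
          simp only [eucNorm, Fin.sum_univ_two]
          rfl
        rw [he]
        exact h3
      have h1 := hN.eventually_ge_atTop 1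
      have h2 : ∀ᶠ t in atTop, N t < 1 :=
        hN0.eventually (eventually_lt_nhds (show (0:ℝ) < 1 by norm_num))
      obtain ⟨t, ht1, ht2⟩ := (h1.and h2).exists
      linarith
  · -- {0} ⊆ Kinf1
    rintro c hc
    rw [Set.mem_singleton_iff] at hc
    subst hc
    set x : ℕ → (Fin 2 → ℂ) := fun t => ![((t:ℂ)+1)⁻¹, (t:ℂ)+1] with hx
    have hx0 : ∀ t, x t 0 = ((t:ℂ)+1)⁻¹ := fun t => rfl
    have hx1 : ∀ t, x t 1 = (t:ℂ)+1 := fun t => rfl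
    have hrne : ∀ t : ℕ, ((t:ℂ)+1) ≠ 0 := by
      intro t
      have h : ((t:ℂ)+1) = ((t+1 : ℕ) : ℂ) := by push_cast; ring
      rw [h]
      exact Nat.cast_ne_zero.mpr (Nat.succ_ne_zero t)
    have hnorm : ∀ t : ℕ, ‖((t:ℂ)+1)‖ = (t:ℝ)+1 := by
      intro t
      rw [show ((t:ℂ)+1) = ((((t:ℝ)+1 : ℝ)) : ℂ) by push_cast; ring, Complex.norm_real,
        Real.norm_of_nonneg (by positivity)]
    have hs1 : ∀ t : ℕ, (1:ℝ) ≤ (t:ℝ)+1 := fun t => by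
      have : (0:ℝ) ≤ (t:ℝ) := Nat.cast_nonneg t
      linarith
    have hsTop : Tendsto (fun t : ℕ => (t:ℝ)+1) atTop atTop :=
      tendsto_atTop_add_const_right _ 1 tendsto_natCast_atTop_atTop
    refine ⟨x, ?_, ?_, ?_⟩
    · -- eucNorm (x t) → ∞
      apply tendsto_atTop_mono _ hsTop
      intro t
      calc (t:ℝ)+1 = ‖x t 1‖ := by rw [hx1, hnorm]
        _ ≤ eucNorm (x t) := norm_le_eucNorm (x t) 1
    · -- eval → 0
      have he : (fun t => eval (x t)
          ((X 0) ^ 4 + (X 0 * X 1 - 1) ^ 2 : MvPolynomial (Fin 2) ℂ))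
          = fun t : ℕ => (((t:ℂ)+1)⁻¹)^4 := by
        funext t
        rw [eval_Fpoly, hx0, hx1, inv_mul_cancel₀ (hrne t)]
        ring
      rw [he, tendsto_zero_iff_norm_tendsto_zero]
      have h1 := (hsTop.inv_tendsto_atTop).pow 4
      have h2 : (fun t : ℕ => ‖(((t:ℂ)+1)⁻¹)^4‖) = fun t : ℕ => (((t:ℝ)+1)⁻¹)^4 := by
        funext t
        rw [norm_pow, norm_inv, hnorm]
      rw [h2]
      simpa using h1
    · -- eucNorm * eucNorm(grad) → 0
      have hG : ∀ t : ℕ, eucNorm (fun k => eval (x t)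
          (pderiv k ((X 0) ^ 4 + (X 0 * X 1 - 1) ^ 2 : MvPolynomial (Fin 2) ℂ)))
          = 4 * (((t:ℝ)+1)⁻¹)^3 := by
        intro t
        rw [eucNorm, Fin.sum_univ_two, eval_pd0, eval_pd1, hx0, hx1,
          inv_mul_cancel₀ (hrne t)]
        simp only [sub_self, mul_zero, zero_mul, add_zero, norm_zero]
        rw [norm_mul, norm_pow, norm_inv, hnorm]
        have h4 : ‖(4:ℂ)‖ = 4 := by
          rw [show (4:ℂ) = ((4:ℝ):ℂ) by norm_num, Complex.norm_real,
            Real.norm_of_nonneg (by norm_num)]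
        rw [h4,
          show (4 * (((t:ℝ)+1)⁻¹)^3)^2 + 0^2 = (4 * (((t:ℝ)+1)⁻¹)^3)^2 by ring]
        exact Real.sqrt_sq (by positivity)
      have hNle : ∀ t : ℕ, eucNorm (x t) ≤ 2 * ((t:ℝ)+1) := by
        intro t
        have hinv : ((t:ℝ)+1)⁻¹ ≤ 1 := inv_le_one_of_one_le₀ (hs1 t)
        have hinvnn : (0:ℝ) ≤ ((t:ℝ)+1)⁻¹ := by positivity
        rw [eucNorm, Fin.sum_univ_two, hx0, hx1, norm_inv, hnorm]
        have : (((t:ℝ)+1)⁻¹)^2 + ((t:ℝ)+1)^2 ≤ (2*((t:ℝ)+1))^2 := by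
          nlinarith [hs1 t]
        calc Real.sqrt ((((t:ℝ)+1)⁻¹)^2 + ((t:ℝ)+1)^2)
            ≤ Real.sqrt ((2*((t:ℝ)+1))^2) := Real.sqrt_le_sqrt this
          _ = 2*((t:ℝ)+1) := Real.sqrt_sq (by positivity)
      apply squeeze_zero (fun t => mul_nonneg (eucNorm_nonneg _) (eucNorm_nonneg _))
        (g := fun t : ℕ => 8 * (((t:ℝ)+1)⁻¹)^2)
      · intro t
        rw [hG t]
        calc eucNorm (x t) * (4 * (((t:ℝ)+1)⁻¹)^3)
            ≤ (2 * ((t:ℝ)+1)) * (4 * (((t:ℝ)+1)⁻¹)^3) :=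
              mul_le_mul_of_nonneg_right (hNle t) (by positivity)
          _ = 8 * (((t:ℝ)+1)⁻¹)^2 := by
              have hne : ((t:ℝ)+1) ≠ 0 := by positivity
              field_simp
              ring
      · have h1 := (hsTop.inv_tendsto_atTop).pow 2
        have := h1.const_mul (8:ℝ)
        simpa using this
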